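/- arXiv:1008.0431 — 5 statements merged into one kernel-verified Lean document; each statement's English description precedes it below -/
import Mathlib

section
/- Let γ, δ, λ, F̄, S̄ be positive reals and set ξ = γF̄/δ. Define p₂(y) = (δ+γ)y² − γ(1/δ + F̄ + ξ + S̄)y + γξS̄. Then p₂ has exactly two positive real roots α₁ < α₂, and they satisfy α₁ < ξ < α₂. -/
set_option maxHeartbeats 2000000 in
/-- The polynomial p₂(y) = (δ+γ)y² − γ(1/δ + F̄ + ξ + S̄)y + γξS̄, with ξ = γF̄/δ,
has exactly two positive real roots α₁ < α₂, satisfying α₁ < ξ < α₂. -/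
theorem stmt_4 (γ δ lam F S : ℝ) (hγ : 0 < γ) (hδ : 0 < δ) (hlam : 0 < lam)
    (hF : 0 < F) (hS : 0 < S)
    (ξ : ℝ) (hξ : ξ = γ * F / δ)
    (p₂ : ℝ → ℝ)
    (hp₂ : p₂ = fun y => (δ + γ) * y ^ 2 - γ * (1 / δ + F + ξ + S) * y + γ * ξ * S) :
    ∃ α₁ α₂ : ℝ, 0 < α₁ ∧ α₁ < ξ ∧ ξ < α₂ ∧ p₂ α₁ = 0 ∧ p₂ α₂ = 0 ∧
      ∀ y : ℝ, 0 < y → p₂ y = 0 → y = α₁ ∨ y = α₂ := by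
  have hξpos : 0 < ξ := by rw [hξ]; positivity
  have hpξ : p₂ ξ = -(γ * ξ / δ) := by
    rw [hp₂]; simp only
    rw [hξ]; field_simp; ring
  have hpξneg : p₂ ξ < 0 := by
    rw [hpξ]
    have : 0 < γ * ξ / δ := by positivity
    linarith
  set a : ℝ := δ + γ with ha
  set B : ℝ := γ * (1 / δ + F + ξ + S) with hB
  set c : ℝ := γ * ξ * S with hc
  have hapos : 0 < a := by positivity
  have hBpos : 0 < B := by
    have h1 : 0 < 1 / δ + F + ξ + S := by positivity
    positivity
  have hcpos : 0 < c := by positivity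
  set D : ℝ := B ^ 2 - 4 * a * c with hD
  have hkey : D = (2 * a * ξ - B) ^ 2 - 4 * a * p₂ ξ := by
    rw [hp₂]; simp only; rw [hD]; ring
  have hDpos : 0 < D := by
    rw [hkey]
    nlinarith [sq_nonneg (2 * a * ξ - B)]
  set s : ℝ := Real.sqrt D with hsdef
  have hs2 : s ^ 2 = D := Real.sq_sqrt hDpos.le
  have hsnn : 0 ≤ s := Real.sqrt_nonneg D
  clear_value a B c D s
  have hspos : 0 < s := by nlinarith
  have hsB : s < B := by nlinarith
  have hsq : (2 * a * ξ - B) ^ 2 < s ^ 2 := by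
    rw [hs2, hkey]; nlinarith
  have hlow : B - s < 2 * a * ξ := by
    nlinarith [sq_nonneg (s + (2 * a * ξ - B))]
  have hhigh : 2 * a * ξ < B + s := by
    nlinarith [sq_nonneg (s - (2 * a * ξ - B))]
  have h2a : (2 * a) ≠ 0 := by positivity
  have h4a : (4 * a) ≠ 0 := by positivity
  have hval : ∀ t : ℝ, p₂ ((B + t) / (2 * a)) * (4 * a) = t ^ 2 - D := by
    intro t
    have hu : 2 * a * ((B + t) / (2 * a)) = B + t := by
      rw [mul_div_cancel₀ _ h2a]
    rw [hp₂]; simp only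
    rw [hD]
    linear_combination (2 * a * ((B + t) / (2 * a)) - B + t) * hu
  have hroot : ∀ t : ℝ, t ^ 2 = D → p₂ ((B + t) / (2 * a)) = 0 := by
    intro t ht
    have := hval t
    rw [ht, sub_self] at this
    exact (mul_eq_zero.mp this).resolve_right h4a
  refine ⟨(B + -s) / (2 * a), (B + s) / (2 * a), ?_, ?_, ?_, ?_, ?_, ?_⟩
  · apply div_pos (by linarith) (by linarith)
  · rw [div_lt_iff₀ (by linarith)]; linarith
  · rw [lt_div_iff₀ (by linarith)]; linarith
  · exact hroot (-s) (by rw [← hs2]; ring)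
  · exact hroot s hs2
  · intro y hy hpy
    rw [hp₂] at hpy; simp only at hpy
    have hu1 : 2 * a * ((B + -s) / (2 * a)) = B + -s := by
      rw [mul_div_cancel₀ _ h2a]
    have hu2 : 2 * a * ((B + s) / (2 * a)) = B + s := by
      rw [mul_div_cancel₀ _ h2a]
    have hkey2 : a * (y - (B + -s) / (2 * a)) * (y - (B + s) / (2 * a)) * (4 * a) =
        (a * y ^ 2 - B * y + c) * (4 * a) + (B ^ 2 - s ^ 2 - 4 * a * c) := by
      linear_combination (-(2 * a * y - 2 * a * ((B + -s) / (2 * a)))) * hu2 +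
        (-(2 * a * y - (B + s))) * hu1
    have hzero : a * (y - (B + -s) / (2 * a)) * (y - (B + s) / (2 * a)) * (4 * a) = 0 := by
      rw [hkey2, hpy, hs2, hD]
      ring
    have hzero2 : a * (y - (B + -s) / (2 * a)) * (y - (B + s) / (2 * a)) = 0 :=
      (mul_eq_zero.mp hzero).resolve_right h4a
    rcases mul_eq_zero.mp hzero2 with h | h
    · rcases mul_eq_zero.mp h with h' | h'
      · exact absurd h' (ne_of_gt hapos)
      · left; linarith [sub_eq_zero.mp h']
    · right; linarith [sub_eq_zero.mp h]
end

section
/- Let γ, δ, λ, F̄, S̄ > 0, ξ = γF̄/δ, p₁(y) = λy(ξ − y), p₂(y) = (δ+γ)y² − γ(1/δ + F̄ + ξ + S̄)y + γξS̄, and let α₁ be the smaller positive root of p₂. Then g = p₁/p₂ is continuous and strictly increasing on [0, α₁), g(0) = 0, and g(y) → +∞ as y → α₁ from the left. -/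
/-- g = p₁/p₂ is continuous and strictly increasing on [0, α₁), g(0) = 0, and
g(y) → +∞ as y → α₁⁻, where α₁ is the smaller positive root of p₂. -/
theorem stmt_5 (γ δ lam F S : ℝ) (hγ : 0 < γ) (hδ : 0 < δ) (hlam : 0 < lam)
    (hF : 0 < F) (hS : 0 < S)
    (ξ : ℝ) (hξ : ξ = γ * F / δ)
    (p₁ p₂ : ℝ → ℝ)
    (hp₁ : p₁ = fun y => lam * y * (ξ - y))
    (hp₂ : p₂ = fun y => (δ + γ) * y ^ 2 - γ * (1 / δ + F + ξ + S) * y + γ * ξ * S)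
    (α₁ : ℝ) (hα₁pos : 0 < α₁) (hα₁root : p₂ α₁ = 0)
    (hα₁min : ∀ y : ℝ, 0 < y → y < α₁ → p₂ y ≠ 0)
    (g : ℝ → ℝ) (hg : g = fun y => p₁ y / p₂ y) :
    ContinuousOn g (Set.Ico 0 α₁) ∧ StrictMonoOn g (Set.Ico 0 α₁) ∧ g 0 = 0 ∧
      Filter.Tendsto g (nhdsWithin α₁ (Set.Iio α₁)) Filter.atTop := by
  have hδ' : δ ≠ 0 := hδ.ne'
  have hγ' : γ ≠ 0 := hγ.ne'
  have hξpos : 0 < ξ := by rw [hξ]; positivity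
  have hγF : γ * F = δ * ξ := by rw [hξ]; field_simp
  have hFe : F = δ * ξ / γ := by field_simp; linarith [hγF]
  have hp₁c : Continuous p₁ := by rw [hp₁]; fun_prop
  have hp₂c : Continuous p₂ := by rw [hp₂]; fun_prop
  have hp₂0 : 0 < p₂ 0 := by
    rw [hp₂]; simp; positivity
  have hp₂ξ : p₂ ξ = -(γ * ξ / δ) := by
    rw [hp₂, hFe]; field_simp; ring
  -- p₂ is positive on [0, α₁)
  have hpos : ∀ y : ℝ, 0 ≤ y → y < α₁ → 0 < p₂ y := by
    intro y hy0 hy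
    rcases eq_or_lt_of_le hy0 with h | h
    · rwa [← h]
    by_contra hle
    push_neg at hle
    rcases lt_or_eq_of_le hle with hlt | heq
    · obtain ⟨c, hc, hc0⟩ := intermediate_value_Icc' h.le hp₂c.continuousOn
        (Set.mem_Icc.mpr ⟨hlt.le, hp₂0.le⟩)
      have hcpos : 0 < c := by
        rcases eq_or_lt_of_le hc.1 with h0 | h0
        · exact absurd hc0 (by rw [← h0]; exact hp₂0.ne')
        · exact h0
      exact hα₁min c hcpos (lt_of_le_of_lt hc.2 hy) hc0
    · exact hα₁min y h hy heq
  have hp₂ξneg : p₂ ξ < 0 := by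
    rw [hp₂ξ]; have : 0 < γ * ξ / δ := by positivity
    linarith
  -- α₁ < ξ
  have hα₁ξ : α₁ < ξ := by
    by_contra hle
    push_neg at hle
    obtain ⟨c, hc, hc0⟩ := intermediate_value_Icc' hξpos.le hp₂c.continuousOn
      (Set.mem_Icc.mpr ⟨hp₂ξneg.le, hp₂0.le⟩)
    have hcpos : 0 < c := by
      rcases eq_or_lt_of_le hc.1 with h0 | h0
      · exact absurd hc0 (by rw [← h0]; exact hp₂0.ne')
      · exact h0
    have hcξ : c < ξ := by
      rcases eq_or_lt_of_le hc.2 with h0 | h0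
      · exact absurd hc0 (by rw [h0]; exact hp₂ξneg.ne)
      · exact h0
    exact hα₁min c hcpos (lt_of_lt_of_le hcξ hle) hc0
  -- key algebraic identity
  have key : ∀ a b : ℝ, p₁ b * p₂ a - p₁ a * p₂ b
      = lam * (b - a) * (γ * S * (ξ - a) * (ξ - b) + γ / δ * (a * b)) := by
    intro a b
    rw [hp₁, hp₂, hFe]
    field_simp
    ring
  -- continuity
  have hcont : ContinuousOn g (Set.Ico 0 α₁) := by
    rw [hg]
    exact ContinuousOn.div hp₁c.continuousOn hp₂c.continuousOn
      (fun y hy => (hpos y hy.1 hy.2).ne')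
  refine ⟨hcont, ?_, ?_, ?_⟩
  · -- strict monotonicity
    intro a ha b hb hab
    rw [hg]
    dsimp only
    rw [div_lt_div_iff₀ (hpos a ha.1 ha.2) (hpos b hb.1 hb.2)]
    have h2 : 0 < ξ - a := by linarith [ha.2, hα₁ξ]
    have h3 : 0 < ξ - b := by linarith [hb.2, hα₁ξ]
    have h4 : 0 ≤ γ / δ * (a * b) := by
      have hb0 : 0 ≤ b := hb.1
      have ha0 : 0 ≤ a := ha.1
      positivity
    have h5 : 0 < γ * S * (ξ - a) * (ξ - b) := by positivity
    have h6 : 0 < lam * (b - a) * (γ * S * (ξ - a) * (ξ - b) + γ / δ * (a * b)) := by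
      apply mul_pos (mul_pos hlam (by linarith)) (by linarith)
    have := key a b
    linarith
  · rw [hg, hp₁]; simp
  · -- tendsto atTop
    have hp₁α : 0 < p₁ α₁ := by
      rw [hp₁]
      exact mul_pos (mul_pos hlam hα₁pos) (by linarith)
    have ht2 : Filter.Tendsto p₂ (nhdsWithin α₁ (Set.Iio α₁)) (nhdsWithin 0 (Set.Ioi 0)) := by
      apply tendsto_nhdsWithin_of_tendsto_nhds_of_eventually_within
      · have := hp₂c.tendsto α₁
        rw [hα₁root] at this
        exact this.mono_left nhdsWithin_le_nhds
      · filter_upwards [Ioo_mem_nhdsLT_of_mem (Set.mem_Ioc.mpr ⟨hα₁pos, le_refl α₁⟩)]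
          with y hy
        exact hpos y hy.1.le hy.2
    have ht3 : Filter.Tendsto (fun y => (p₂ y)⁻¹) (nhdsWithin α₁ (Set.Iio α₁))
        Filter.atTop := tendsto_inv_nhdsGT_zero.comp ht2
    have ht1 : Filter.Tendsto p₁ (nhdsWithin α₁ (Set.Iio α₁)) (nhds (p₁ α₁)) :=
      (hp₁c.tendsto α₁).mono_left nhdsWithin_le_nhds
    have := Filter.Tendsto.pos_mul_atTop hp₁α ht1 ht3
    rw [hg]
    simpa only [div_eq_mul_inv] using this
end

section
/- Let δ, γ, F̄, S̄ > 0 and for y ∈ [0, S̄) define the polynomial in x: d(x, y) = (S̄ − y) − x − F̄(δ+γ)x + δ(S̄ − y)x − δx². Then for each fixed y ∈ [0, S̄), d(·, y) has exactly one positive real root ρ(y), and ρ is strictly decreasing in y: if 0 ≤ y₁ < y₂ < S̄ then ρ(y₂) < ρ(y₁). -/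
/-- For each y ∈ [0, S̄), the quadratic d(·, y) has exactly one positive root ρ(y),
and ρ is strictly decreasing in y. -/
theorem stmt_7 (δ γ F S : ℝ) (hδ : 0 < δ) (hγ : 0 < γ) (hF : 0 < F) (hS : 0 < S)
    (d : ℝ → ℝ → ℝ)
    (hd : d = fun x y => (S - y) - x - F * (δ + γ) * x + δ * (S - y) * x - δ * x ^ 2) :
    ∃ ρ : ℝ → ℝ,
      (∀ y : ℝ, 0 ≤ y → y < S →
        (0 < ρ y ∧ d (ρ y) y = 0 ∧ ∀ x : ℝ, 0 < x → d x y = 0 → x = ρ y)) ∧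
      ∀ y₁ y₂ : ℝ, 0 ≤ y₁ → y₁ < y₂ → y₂ < S → ρ y₂ < ρ y₁ := by
  set C : ℝ := 1 + F * (δ + γ) with hC
  have hCpos : 0 < C := by positivity
  set ρ : ℝ → ℝ := fun y =>
    ((δ * (S - y) - C) + Real.sqrt ((δ * (S - y) - C) ^ 2 + 4 * δ * (S - y))) / (2 * δ)
    with hρdef
  -- key: positivity and root equation for ρ y
  have key : ∀ y : ℝ, 0 ≤ y → y < S →
      0 < ρ y ∧ δ * (ρ y) ^ 2 + C * ρ y - (S - y) * (1 + δ * ρ y) = 0 := by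
    intro y hy0 hyS
    have hA : 0 < S - y := by linarith
    set E : ℝ := δ * (S - y) - C with hE
    have hdisc : E ^ 2 < E ^ 2 + 4 * δ * (S - y) := by nlinarith
    have hdisc0 : 0 ≤ E ^ 2 + 4 * δ * (S - y) := by nlinarith
    have hsq : Real.sqrt (E ^ 2 + 4 * δ * (S - y)) ^ 2 = E ^ 2 + 4 * δ * (S - y) :=
      Real.sq_sqrt hdisc0
    have hsqrt_gt : |E| < Real.sqrt (E ^ 2 + 4 * δ * (S - y)) := by
      have := Real.sqrt_lt_sqrt (sq_nonneg E) hdisc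
      rwa [Real.sqrt_sq_eq_abs] at this
    have habs : -E ≤ |E| := neg_le_abs E
    have hρy : ρ y = (E + Real.sqrt (E ^ 2 + 4 * δ * (S - y))) / (2 * δ) := by
      rw [hρdef]
    have hρpos : 0 < ρ y := by
      rw [hρy]; apply div_pos _ (by linarith); linarith
    have h2 : 2 * δ * ρ y - E = Real.sqrt (E ^ 2 + 4 * δ * (S - y)) := by
      rw [hρy]; field_simp; ring
    have h3 : (2 * δ * ρ y - E) ^ 2 = E ^ 2 + 4 * δ * (S - y) := by rw [h2]; exact hsq
    refine ⟨hρpos, ?_⟩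
    have h4 : 4 * δ * (δ * (ρ y) ^ 2 + C * ρ y - (S - y) * (1 + δ * ρ y)) = 0 := by
      linear_combination h3
    have h4δ : (4 * δ : ℝ) ≠ 0 := by positivity
    exact (mul_eq_zero.mp h4).resolve_left h4δ
  refine ⟨ρ, ?_, ?_⟩
  · intro y hy0 hyS
    obtain ⟨hρpos, heq⟩ := key y hy0 hyS
    have hA : 0 < S - y := by linarith
    obtain ⟨r, hr⟩ : ∃ r, ρ y = r := ⟨ρ y, rfl⟩
    rw [hr] at hρpos heq ⊢
    have hroot : d r y = 0 := by
      rw [hd]; simp only; linear_combination -heq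
    refine ⟨hρpos, hroot, ?_⟩
    intro x hx hxroot
    have ex : δ * x ^ 2 + C * x - (S - y) * (1 + δ * x) = 0 := by
      rw [hd] at hxroot; simp only at hxroot; linear_combination -hxroot
    have hfac : (x - r) * (δ * x * r + (S - y)) = 0 := by
      linear_combination r * ex - x * heq
    have hpos2 : 0 < δ * x * r + (S - y) := by positivity
    have := mul_eq_zero.mp hfac
    rcases this with h | h
    · linarith [sub_eq_zero.mp h]
    · exact absurd h (ne_of_gt hpos2)
  · intro y₁ y₂ h1 h12 h2S
    have hA1 : 0 < S - y₁ := by linarith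
    have hA2 : 0 < S - y₂ := by linarith
    obtain ⟨hp1, he1⟩ := key y₁ h1 (by linarith)
    obtain ⟨hp2, he2⟩ := key y₂ (by linarith) h2S
    obtain ⟨r1, hr1⟩ : ∃ r, ρ y₁ = r := ⟨ρ y₁, rfl⟩
    obtain ⟨r2, hr2⟩ : ∃ r, ρ y₂ = r := ⟨ρ y₂, rfl⟩
    rw [hr1] at hp1 he1; rw [hr2] at hp2 he2; rw [hr1, hr2]
    by_contra hle
    push_neg at hle
    have hsub : 0 ≤ r2 - r1 := sub_nonneg.mpr hle
    have comb : ((S - y₂) - (S - y₁)) * ((1 + δ * r1) * (1 + δ * r2))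
        = (r2 - r1) * (δ * (r1 + r2) + C + δ ^ 2 * r1 * r2) := by
      linear_combination (1 + δ * r2) * he1 - (1 + δ * r1) * he2
    have hL : ((S - y₂) - (S - y₁)) * ((1 + δ * r1) * (1 + δ * r2)) < 0 := by
      apply mul_neg_of_neg_of_pos (by linarith)
      positivity
    have hR : 0 ≤ (r2 - r1) * (δ * (r1 + r2) + C + δ ^ 2 * r1 * r2) := by
      apply mul_nonneg hsub; positivity
    linarith [comb ▸ hL]
end

section
/- Let λ, δ, γ, F̄, S̄, Ē > 0, Δ = γF̄ − δĒ, and φ(s) = λF̄s/((1+δs)(Ē − Δs)) + s + (γ+δ)F̄s/(1+δs) on Γ (where Γ = [0,∞) if Δ ≤ 0 and Γ = [0, Ē/Δ) if Δ > 0). Let ψ : [0,∞) → Γ be the inverse of φ. Then as S̄ → ∞, ψ(S̄) → +∞ if c¹F̄ ≤ c⁰Ē (equivalently Δ ≤ 0 with γ = (c¹/c⁰)δ), while ψ(S̄) → Ē/Δ if Δ > 0. -/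
/-- If φ is continuous on [0,a], ψ is nonnegative and a right inverse of φ on [0,∞),
then eventually ψ S > a as S → ∞. -/
lemma aux_escape (φ ψ : ℝ → ℝ) (a : ℝ) (ha : 0 ≤ a)
    (hc : ContinuousOn φ (Set.Icc 0 a))
    (h : ∀ S : ℝ, 0 ≤ S → 0 ≤ ψ S ∧ φ (ψ S) = S) :
    ∀ᶠ S in Filter.atTop, a < ψ S := by
  obtain ⟨x0, hx0mem, hx0⟩ := isCompact_Icc.exists_isMaxOn (Set.nonempty_Icc.2 ha) hc
  filter_upwards [Filter.eventually_gt_atTop (max (φ x0) 0)] with S hS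
  have hS0 : 0 ≤ S := le_of_lt (lt_of_le_of_lt (le_max_right _ _) hS)
  obtain ⟨hψ0, hψφ⟩ := h S hS0
  by_contra h'
  push_neg at h'
  have : φ (ψ S) ≤ φ x0 := hx0 ⟨hψ0, h'⟩
  rw [hψφ] at this
  exact absurd (lt_of_le_of_lt this (lt_of_le_of_lt (le_max_left _ _) hS)) (lt_irrefl _)

/-- Asymptotics of the steady-state modified substrate ψ(S̄) as S̄ → ∞:
ψ → ∞ if c¹F̄ ≤ c⁰Ē (i.e. Δ ≤ 0), and ψ → Ē/Δ if Δ > 0. -/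
theorem stmt_14 (lam δ γ F E c0 c1 : ℝ) (hlam : 0 < lam) (hδ : 0 < δ)
    (hF : 0 < F) (hE : 0 < E) (hc0 : 0 < c0) (hc1 : 0 < c1)
    (hγ : γ = (c1 / c0) * δ)
    (Δ : ℝ) (hΔ : Δ = γ * F - δ * E)
    (Γ : Set ℝ) (hΓ : Γ = if Δ ≤ 0 then Set.Ici 0 else Set.Ico 0 (E / Δ))
    (φ : ℝ → ℝ)
    (hφ : φ = fun s => lam * F * s / ((1 + δ * s) * (E - Δ * s)) + s
        + (γ + δ) * F * s / (1 + δ * s))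
    (ψ : ℝ → ℝ)
    (hψ : ∀ S : ℝ, 0 ≤ S → ψ S ∈ Γ ∧ φ (ψ S) = S) :
    (c1 * F ≤ c0 * E → Filter.Tendsto ψ Filter.atTop Filter.atTop) ∧
    (0 < Δ → Filter.Tendsto ψ Filter.atTop (nhds (E / Δ))) := by
  have hψ0 : ∀ S : ℝ, 0 ≤ S → 0 ≤ ψ S := by
    intro S hS
    have := (hψ S hS).1
    rw [hΓ] at this
    split_ifs at this with h
    · exact this
    · exact this.1
  -- continuity helper: φ is continuous on [0,a] whenever E - Δ s > 0 on [0,a]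
  have hcont : ∀ a : ℝ, 0 ≤ a → (∀ s ∈ Set.Icc (0:ℝ) a, 0 < E - Δ * s) →
      ContinuousOn φ (Set.Icc 0 a) := by
    intro a _ hpos
    rw [hφ]
    have h1 : ∀ s ∈ Set.Icc (0:ℝ) a, (0:ℝ) < 1 + δ * s := by
      intro s hs
      have : 0 ≤ δ * s := mul_nonneg hδ.le hs.1
      linarith
    apply ContinuousOn.add
    apply ContinuousOn.add
    · apply ContinuousOn.div (by fun_prop) (by fun_prop)
      intro s hs
      exact ne_of_gt (mul_pos (h1 s hs) (hpos s hs))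
    · exact continuousOn_id
    · apply ContinuousOn.div (by fun_prop) (by fun_prop)
      intro s hs
      exact ne_of_gt (h1 s hs)
  constructor
  · -- case Δ ≤ 0
    intro hle
    have hΔle : Δ ≤ 0 := by
      rw [hΔ, hγ]
      have : c1 / c0 * δ * F - δ * E = δ / c0 * (c1 * F - c0 * E) := by
        field_simp
      rw [this]
      exact mul_nonpos_of_nonneg_of_nonpos (by positivity) (by linarith)
    rw [Filter.tendsto_atTop]
    intro b
    have ha : (0:ℝ) ≤ max b 0 := le_max_right _ _
    have hc := hcont (max b 0) ha (by
      intro s hs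
      have : Δ * s ≤ 0 := mul_nonpos_of_nonpos_of_nonneg hΔle hs.1
      linarith)
    filter_upwards [aux_escape φ ψ (max b 0) ha hc
      (fun S hS => ⟨hψ0 S hS, (hψ S hS).2⟩)] with S hS
    exact le_of_lt (lt_of_le_of_lt (le_max_left _ _) hS)
  · -- case Δ > 0
    intro hΔpos
    have hEΔ : 0 < E / Δ := div_pos hE hΔpos
    have hub : ∀ S : ℝ, 0 ≤ S → ψ S < E / Δ := by
      intro S hS
      have := (hψ S hS).1
      rw [hΓ, if_neg (not_le.2 hΔpos)] at this
      exact this.2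
    rw [Metric.tendsto_nhds]
    intro ε hε
    set a : ℝ := max (E / Δ - ε) 0 with ha_def
    have ha : 0 ≤ a := le_max_right _ _
    have haEΔ : a < E / Δ := by
      apply max_lt (by linarith) hEΔ
    have hc := hcont a ha (by
      intro s hs
      have h1 : s < E / Δ := lt_of_le_of_lt hs.2 haEΔ
      have : Δ * s < Δ * (E / Δ) := (mul_lt_mul_iff_right₀ hΔpos).2 h1
      rw [mul_div_cancel₀ _ (ne_of_gt hΔpos)] at this
      linarith)
    filter_upwards [aux_escape φ ψ a ha hc
      (fun S hS => ⟨hψ0 S hS, (hψ S hS).2⟩),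
      Filter.eventually_ge_atTop (0:ℝ)] with S hS hS0
    have h1 : ψ S < E / Δ := hub S hS0
    have h2 : E / Δ - ε < ψ S := lt_of_le_of_lt (le_max_left _ _) hS
    rw [Real.dist_eq, abs_lt]
    constructor <;> linarith
end

section
/- Let λ, δ, γ, F̄ > 0 and for S̄ > 0 define d_{S̄}(x, y) = (S̄ − y) − x − F̄(δ+γ)x + δ(S̄−y)x − δx². For fixed x, y ≥ 0 with y < S̄ < S̄', one has d_{S̄}(x,y) < d_{S̄'}(x,y); consequently the unique positive root ρ_{S̄}(y) of d_{S̄}(·, y) is strictly increasing in S̄, and ρ_{S̄}(y) → +∞ as S̄ → +∞. -/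
/-- Monotonicity of the layer polynomial and its positive root in the substrate
total S̄: d is strictly increasing in S̄, hence so is the positive root ρ, and
ρ → +∞ as S̄ → +∞. -/
theorem stmt_16 (lam δ γ F : ℝ) (hlam : 0 < lam) (hδ : 0 < δ) (hγ : 0 < γ)
    (hF : 0 < F)
    (d : ℝ → ℝ → ℝ → ℝ)
    (hd : d = fun S x y =>
      (S - y) - x - F * (δ + γ) * x + δ * (S - y) * x - δ * x ^ 2)
    (y : ℝ) (hy : 0 ≤ y)
    (ρ : ℝ → ℝ)
    (hρ : ∀ S : ℝ, y < S →
      (0 < ρ S ∧ d S (ρ S) y = 0 ∧ ∀ x : ℝ, 0 < x → d S x y = 0 → x = ρ S)) :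
    (∀ x S S' : ℝ, 0 ≤ x → y < S → S < S' → d S x y < d S' x y) ∧
    StrictMonoOn ρ (Set.Ioi y) ∧
    Filter.Tendsto ρ Filter.atTop Filter.atTop := by
  subst hd
  -- key: if f(x) > 0 at some x > 0, then x < ρ S
  have key : ∀ S : ℝ, y < S → ∀ x : ℝ, 0 < x →
      0 < (S - y) - x - F * (δ + γ) * x + δ * (S - y) * x - δ * x ^ 2 →
      x < ρ S := by
    intro S hS x hx hpos
    obtain ⟨hb, hroot, _⟩ := hρ S hS
    simp only at hroot
    by_contra hle
    push_neg at hle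
    have hSy : 0 < S - y := by linarith
    nlinarith [mul_pos hδ hb, mul_pos hδ hx, sq_nonneg (x - ρ S),
      mul_pos (mul_pos hδ hb) hb]
  refine ⟨?_, ?_, ?_⟩
  · intro x S S' hx hS hSS'
    simp only
    nlinarith [mul_nonneg hδ.le hx]
  · intro S hS S' hS' hSS'
    simp only [Set.mem_Ioi] at hS hS'
    obtain ⟨ha, haroot, _⟩ := hρ S hS
    simp only at haroot
    apply key S' hS' (ρ S) ha
    nlinarith [mul_pos hδ ha]
  · rw [Filter.tendsto_atTop]
    intro M
    set M' := max M 1 with hM'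
    have hM'pos : 0 < M' := lt_of_lt_of_le one_pos (le_max_right _ _)
    set K := M' + F * (δ + γ) * M' + δ * M' ^ 2 with hK
    filter_upwards [Filter.eventually_ge_atTop (y + K + 1)] with S hSge
    have hS : y < S := by
      have : 0 < K := by positivity
      linarith
    have hlt : M' < ρ S := by
      apply key S hS M' hM'pos
      have h1 : K < S - y := by linarith
      nlinarith [mul_nonneg (mul_nonneg hδ.le (by linarith : (0:ℝ) ≤ S - y)) hM'pos.le]
    have := le_max_left M 1
    linarith
end
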